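/- Let G be a real (n+1) × l₊ matrix with columns G_1, …, G_{l₊} and H a real (n+1) × l₋ matrix with columns H_1, …, H_{l₋}, let C₁ > 0, C₂ > 0, λ > 0 and a ∈ ℝ. Then the Wave-TSVM objective P₁(w) = (1/2)·‖Gᵀw‖² + (C₁/2)·‖w‖² + C₂·Σ_{j=1}^{l₋} L_{a,λ}(1 + H_jᵀw) on ℝ^{n+1} is differentiable everywhere with gradient ∇P₁(w) = (G·Gᵀ + C₁·I)·w + C₂·Σ_{j=1}^{l₋} s_{1j}(w)·H_j, where s_{1j}(w) = A_j·(a·A_j + 2)·e^{a·A_j} / (1 + λ·A_j²·e^{a·A_j})² and A_j = 1 + H_jᵀw. Consequently, every local minimizer w of P₁ satisfies w = −(G·Gᵀ + C₁·I)^{-1} · (C₂·Σ_{j=1}^{l₋} s_{1j}(w)·H_j), the matrix G·Gᵀ + C₁·I being invertible since C₁ > 0. -/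

import Mathlib

open Matrix

noncomputable def waveLoss (a lam u : ℝ) : ℝ :=
  (1 / lam) * (1 - 1 / (1 + lam * u ^ 2 * Real.exp (a * u)))

/-- The wave-loss penalty factor `s_{1j}(w)` appearing in the Wave-TSVM gradient,
where `A = 1 + H_jᵀ w`. -/
noncomputable def waveFactor (a lam A : ℝ) : ℝ :=
  A * (a * A + 2) * Real.exp (a * A) / (1 + lam * A ^ 2 * Real.exp (a * A)) ^ 2

lemma waveLoss_hasDerivAt {lam : ℝ} (hlam : 0 < lam) (a u : ℝ) :
    HasDerivAt (waveLoss a lam) (waveFactor a lam u) u := by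
  have hD : (0:ℝ) < 1 + lam * u ^ 2 * Real.exp (a * u) := by positivity
  have he : HasDerivAt (fun x : ℝ => Real.exp (a * x)) (Real.exp (a * u) * (a * 1)) u :=
    ((hasDerivAt_id u).const_mul a).exp
  have hq : HasDerivAt (fun x : ℝ => x ^ 2 * Real.exp (a * x))
      ((2:ℕ) * u ^ 1 * Real.exp (a * u) + u ^ 2 * (Real.exp (a * u) * (a * 1))) u :=
    (hasDerivAt_pow 2 u).mul he
  have hDd : HasDerivAt (fun x : ℝ => 1 + lam * x ^ 2 * Real.exp (a * x))
      (lam * ((2:ℕ) * u ^ 1 * Real.exp (a * u) + u ^ 2 * (Real.exp (a * u) * (a * 1)))) u := by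
    simpa [mul_assoc] using (hq.const_mul lam).const_add 1
  have hinv := hDd.inv hD.ne'
  have hfin := (hinv.const_sub 1).const_mul (1 / lam)
  have hfun : waveLoss a lam =
      fun x : ℝ => (1 / lam) * (1 - (1 + lam * x ^ 2 * Real.exp (a * x))⁻¹) := by
    funext x; simp only [waveLoss, one_div]
  rw [hfun]
  refine HasDerivAt.congr_deriv hfin ?_
  rw [waveFactor]
  field_simp
  ring

section grad
variable {n lp lm : ℕ}
    (G : Matrix (Fin (n + 1)) (Fin lp) ℝ) (H : Matrix (Fin (n + 1)) (Fin lm) ℝ)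
    (C₁ C₂ lam a : ℝ)

lemma hasGradientAt_main (hlam : 0 < lam) (w : EuclideanSpace ℝ (Fin (n + 1))) :
    HasGradientAt
      (fun v : EuclideanSpace ℝ (Fin (n + 1)) =>
        (1 / 2) * ∑ i, (Gᵀ.mulVec ((EuclideanSpace.equiv (Fin (n + 1)) ℝ) v) i) ^ 2 +
          (C₁ / 2) * ‖v‖ ^ 2 +
          C₂ * ∑ j, waveLoss a lam
            (1 + ∑ k, H k j * (EuclideanSpace.equiv (Fin (n + 1)) ℝ) v k))
      ((EuclideanSpace.equiv (Fin (n + 1)) ℝ).symm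
        ((G * Gᵀ + C₁ • (1 : Matrix (Fin (n + 1)) (Fin (n + 1)) ℝ)).mulVec
            ((EuclideanSpace.equiv (Fin (n + 1)) ℝ) w) +
          C₂ • ∑ j, waveFactor a lam
              (1 + ∑ k, H k j * (EuclideanSpace.equiv (Fin (n + 1)) ℝ) w k) •
            (fun k => H k j)))
      w := by
  classical
  rw [hasGradientAt_iff_hasFDerivAt]
  -- linear pieces
  have hlin : ∀ c : Fin (n+1) → ℝ,
      HasFDerivAt (fun v : EuclideanSpace ℝ (Fin (n + 1)) => ∑ k, c k * v k)
        (∑ k, c k • (EuclideanSpace.proj k : EuclideanSpace ℝ (Fin (n + 1)) →L[ℝ] ℝ)) w := fun c => by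
    have h := (∑ k, c k • (EuclideanSpace.proj k : EuclideanSpace ℝ (Fin (n + 1)) →L[ℝ] ℝ)).hasFDerivAt (x := w)
    exact h.congr_of_eventuallyEq (Filter.Eventually.of_forall fun v => by simp)
  have h1 : HasFDerivAt (fun v : EuclideanSpace ℝ (Fin (n + 1)) => (1 / 2 : ℝ) * ∑ i, (∑ k, Gᵀ i k * v k) ^ 2)
      ((1 / 2 : ℝ) • ∑ i, (((2:ℕ) : ℝ) * (∑ k, Gᵀ i k * w k) ^ 1) •
        (∑ k, Gᵀ i k • (EuclideanSpace.proj k : EuclideanSpace ℝ (Fin (n + 1)) →L[ℝ] ℝ))) w :=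
    (HasFDerivAt.fun_sum fun i _ =>
      (hasDerivAt_pow 2 (∑ k, Gᵀ i k * w k)).comp_hasFDerivAt w
        (hlin fun k => Gᵀ i k)).const_mul (1/2)
  have h2 : HasFDerivAt (fun v : EuclideanSpace ℝ (Fin (n + 1)) => (C₁ / 2 : ℝ) * ∑ k, (v k) ^ 2)
      ((C₁ / 2 : ℝ) • ∑ k, (((2:ℕ) : ℝ) * (w k) ^ 1) •
        (EuclideanSpace.proj k : EuclideanSpace ℝ (Fin (n + 1)) →L[ℝ] ℝ)) w :=
    (HasFDerivAt.fun_sum fun k _ =>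
      (hasDerivAt_pow 2 (w k)).comp_hasFDerivAt w
        ((EuclideanSpace.proj k : EuclideanSpace ℝ (Fin (n + 1)) →L[ℝ] ℝ).hasFDerivAt (x := w))).const_mul (C₁/2)
  have h3 : HasFDerivAt (fun v : EuclideanSpace ℝ (Fin (n + 1)) => C₂ * ∑ j, waveLoss a lam (1 + ∑ k, H k j * v k))
      (C₂ • ∑ j, waveFactor a lam (1 + ∑ k, H k j * w k) •
        (∑ k, H k j • (EuclideanSpace.proj k : EuclideanSpace ℝ (Fin (n + 1)) →L[ℝ] ℝ))) w :=
    (HasFDerivAt.fun_sum fun j _ =>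
      (waveLoss_hasDerivAt hlam a (1 + ∑ k, H k j * w k)).comp_hasFDerivAt w
        ((hlin fun k => H k j).const_add 1)).const_mul C₂
  have htot := (h1.add h2).add h3
  have hfeq : (fun v : EuclideanSpace ℝ (Fin (n + 1)) =>
      (1 / 2) * ∑ i, (Gᵀ.mulVec ((EuclideanSpace.equiv (Fin (n + 1)) ℝ) v) i) ^ 2 +
        (C₁ / 2) * ‖v‖ ^ 2 +
        C₂ * ∑ j, waveLoss a lam
          (1 + ∑ k, H k j * (EuclideanSpace.equiv (Fin (n + 1)) ℝ) v k)) =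
      (fun v : EuclideanSpace ℝ (Fin (n + 1)) => (1 / 2 : ℝ) * ∑ i, (∑ k, Gᵀ i k * v k) ^ 2 +
        (C₁ / 2 : ℝ) * ∑ k, (v k) ^ 2 +
        C₂ * ∑ j, waveLoss a lam (1 + ∑ k, H k j * v k)) := by
    funext v
    have hn : ‖v‖ ^ 2 = ∑ k, (v k) ^ 2 := by
      rw [EuclideanSpace.norm_eq, Real.sq_sqrt (by positivity)]
      simp [sq_abs]
    rw [hn]; rfl
  rw [hfeq]
  refine htot.congr_fderiv ?_
  apply ContinuousLinearMap.ext
  intro v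
  simp only [one_div, Nat.cast_ofNat, transpose_apply, pow_one, ContinuousLinearMap.add_apply,
    ContinuousLinearMap.coe_smul', ContinuousLinearMap.coe_sum', Pi.smul_apply, Finset.sum_apply,
    PiLp.proj_apply, smul_eq_mul, PiLp.coe_continuousLinearEquiv, WithLp.ofLp_toLp,
    PiLp.coe_symm_continuousLinearEquiv, WithLp.toLp_add, WithLp.toLp_smul,
    map_add, _root_.map_smul, InnerProductSpace.toDual_apply_apply, PiLp.inner_apply,
    PiLp.toLp_apply, RCLike.inner_apply, conj_trivial, map_sum]
  rw [Matrix.add_mulVec, Matrix.smul_mulVec, Matrix.one_mulVec, ← Matrix.mulVec_mulVec]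
  simp only [mul_comm (WithLp.ofLp v _)]
  simp only [Pi.add_apply, Pi.smul_apply, smul_eq_mul, add_mul, Finset.sum_add_distrib,
    WithLp.ofLp_toLp]
  congr 1
  · congr 1
    · -- quadratic term
      rw [Finset.mul_sum]
      simp only [Matrix.mulVec, dotProduct, transpose_apply, Finset.sum_mul,
        WithLp.ofLp_toLp]
      conv_rhs => rw [Finset.sum_comm]
      refine Finset.sum_congr rfl fun i _ => ?_
      have h : ∑ k, G k i * (∑ m, G m i * w m) * v k
          = (∑ m, G m i * w m) * ∑ k, G k i * v k := by
        rw [Finset.mul_sum]; exact Finset.sum_congr rfl fun k _ => by ring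
      rw [h]; ring
    · rw [Finset.mul_sum]
      exact Finset.sum_congr rfl fun k _ => by ring

end grad

theorem waveTSVM_objective_gradient_and_stationarity (n lp lm : ℕ)
    (G : Matrix (Fin (n + 1)) (Fin lp) ℝ) (H : Matrix (Fin (n + 1)) (Fin lm) ℝ)
    (C₁ C₂ lam a : ℝ) (hC₁ : 0 < C₁) (hC₂ : 0 < C₂) (hlam : 0 < lam) :
    (∀ w : EuclideanSpace ℝ (Fin (n + 1)),
      HasGradientAt
        (fun v : EuclideanSpace ℝ (Fin (n + 1)) =>
          (1 / 2) * ∑ i, (Gᵀ.mulVec ((EuclideanSpace.equiv (Fin (n + 1)) ℝ) v) i) ^ 2 +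
            (C₁ / 2) * ‖v‖ ^ 2 +
            C₂ * ∑ j, waveLoss a lam
              (1 + ∑ k, H k j * (EuclideanSpace.equiv (Fin (n + 1)) ℝ) v k))
        ((EuclideanSpace.equiv (Fin (n + 1)) ℝ).symm
          ((G * Gᵀ + C₁ • (1 : Matrix (Fin (n + 1)) (Fin (n + 1)) ℝ)).mulVec
              ((EuclideanSpace.equiv (Fin (n + 1)) ℝ) w) +
            C₂ • ∑ j, waveFactor a lam
                (1 + ∑ k, H k j * (EuclideanSpace.equiv (Fin (n + 1)) ℝ) w k) •
              (fun k => H k j)))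
        w) ∧
    IsUnit (G * Gᵀ + C₁ • (1 : Matrix (Fin (n + 1)) (Fin (n + 1)) ℝ)) ∧
    ∀ w : EuclideanSpace ℝ (Fin (n + 1)),
      IsLocalMin
        (fun v : EuclideanSpace ℝ (Fin (n + 1)) =>
          (1 / 2) * ∑ i, (Gᵀ.mulVec ((EuclideanSpace.equiv (Fin (n + 1)) ℝ) v) i) ^ 2 +
            (C₁ / 2) * ‖v‖ ^ 2 +
            C₂ * ∑ j, waveLoss a lam
              (1 + ∑ k, H k j * (EuclideanSpace.equiv (Fin (n + 1)) ℝ) v k)) w →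
      (EuclideanSpace.equiv (Fin (n + 1)) ℝ) w =
        -(G * Gᵀ + C₁ • (1 : Matrix (Fin (n + 1)) (Fin (n + 1)) ℝ))⁻¹.mulVec
          (C₂ • ∑ j, waveFactor a lam
              (1 + ∑ k, H k j * (EuclideanSpace.equiv (Fin (n + 1)) ℝ) w k) •
            (fun k => H k j)) := by
  have hMpd : (G * Gᵀ + C₁ • (1 : Matrix (Fin (n + 1)) (Fin (n + 1)) ℝ)).PosDef := by
    have h1 : (G * Gᵀ).PosSemidef := by
      simpa using Matrix.posSemidef_self_mul_conjTranspose G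
    have h2 : (C₁ • (1 : Matrix (Fin (n + 1)) (Fin (n + 1)) ℝ)).PosDef := by
      rw [Matrix.smul_one_eq_diagonal]
      exact Matrix.posDef_diagonal_iff.mpr fun i => hC₁
    exact Matrix.PosDef.posSemidef_add h1 h2
  have hUnit := hMpd.isUnit
  refine ⟨fun w => hasGradientAt_main G H C₁ C₂ lam a hlam w, hUnit, fun w hmin => ?_⟩
  have hg := hasGradientAt_main G H C₁ C₂ lam a hlam w
  have h0 := hmin.hasFDerivAt_eq_zero hg.hasFDerivAt
  have h0' : HasGradientAt
      (fun v : EuclideanSpace ℝ (Fin (n + 1)) =>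
        (1 / 2) * ∑ i, (Gᵀ.mulVec ((EuclideanSpace.equiv (Fin (n + 1)) ℝ) v) i) ^ 2 +
          (C₁ / 2) * ‖v‖ ^ 2 +
          C₂ * ∑ j, waveLoss a lam
            (1 + ∑ k, H k j * (EuclideanSpace.equiv (Fin (n + 1)) ℝ) v k))
      (0 : EuclideanSpace ℝ (Fin (n + 1))) w := by
    rw [hasGradientAt_iff_hasFDerivAt, map_zero]
    exact h0 ▸ hg.hasFDerivAt
  have hgz := hg.unique h0'
  have hX : (G * Gᵀ + C₁ • (1 : Matrix (Fin (n + 1)) (Fin (n + 1)) ℝ)).mulVec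
        ((EuclideanSpace.equiv (Fin (n + 1)) ℝ) w) +
      C₂ • ∑ j, waveFactor a lam
          (1 + ∑ k, H k j * (EuclideanSpace.equiv (Fin (n + 1)) ℝ) w k) •
        (fun k => H k j) = 0 := by
    have := congrArg (EuclideanSpace.equiv (Fin (n + 1)) ℝ) hgz
    simpa [PiLp.coe_continuousLinearEquiv] using this
  have hXn := eq_neg_of_add_eq_zero_left hX
  have hdet : IsUnit (G * Gᵀ + C₁ • (1 : Matrix (Fin (n + 1)) (Fin (n + 1)) ℝ)).det :=
    (Matrix.isUnit_iff_isUnit_det _).mp hUnit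
  calc (EuclideanSpace.equiv (Fin (n + 1)) ℝ) w
      = ((G * Gᵀ + C₁ • (1 : Matrix (Fin (n + 1)) (Fin (n + 1)) ℝ))⁻¹ *
          (G * Gᵀ + C₁ • (1 : Matrix (Fin (n + 1)) (Fin (n + 1)) ℝ))).mulVec
          ((EuclideanSpace.equiv (Fin (n + 1)) ℝ) w) := by
        rw [Matrix.nonsing_inv_mul _ hdet, Matrix.one_mulVec]
    _ = (G * Gᵀ + C₁ • (1 : Matrix (Fin (n + 1)) (Fin (n + 1)) ℝ))⁻¹.mulVec
          ((G * Gᵀ + C₁ • (1 : Matrix (Fin (n + 1)) (Fin (n + 1)) ℝ)).mulVec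
            ((EuclideanSpace.equiv (Fin (n + 1)) ℝ) w)) := (Matrix.mulVec_mulVec _ _ _).symm
    _ = -(G * Gᵀ + C₁ • (1 : Matrix (Fin (n + 1)) (Fin (n + 1)) ℝ))⁻¹.mulVec
          (C₂ • ∑ j, waveFactor a lam
              (1 + ∑ k, H k j * (EuclideanSpace.equiv (Fin (n + 1)) ℝ) w k) •
            (fun k => H k j)) := by
        rw [hXn, Matrix.mulVec_neg]
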